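/- Suppose nonnegative integers a₁, a₂, b, and reals f₀ > 0, F₁ = f(1), F₂ = f(−cos 2θ₀) satisfy that the polynomial bound (a₁+2a₂+2b)²·f₀ ≤ (a₁+2a₂+2b)·F₁ + 2a₂·F₂ holds. Show the abstract step of Theorem 4: if P ⊂ S^{n-1} is a 60°-code in the closed upper hemisphere, P_{a₂} = {p ∈ P : π/3 ≤ dist(p,N) ≤ θ₀}, P_b = {p ∈ P : dist(p,N) < π/3}, then the set P ∪ P_{a₂}' ∪ P_b' (reflections across the equator) has pairwise angular distances ≥ π/3 except possibly for the pairs (p, p') with p ∈ P_{a₂}, which satisfy dist(p, p') ≥ π − 2θ₀. -/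

import Mathlib

open Real
open scoped RealInnerProductSpace
open scoped Classical

/-- Reflection of a point of `ℝ^{n+1}` across the hyperplane where the last
coordinate vanishes. -/
def reflLast (n : ℕ) (p : EuclideanSpace ℝ (Fin (n + 1))) :
    EuclideanSpace ℝ (Fin (n + 1)) :=
  WithLp.toLp 2 (fun i => if i = Fin.last n then -(p i) else p i)

lemma my_arccos_anti {x y : ℝ} (h : x ≤ y) : arccos y ≤ arccos x := by
  rw [Real.arccos, Real.arccos]
  linarith [Real.monotone_arcsin h]

lemma inner_reflLast_left (n : ℕ) (p q : EuclideanSpace ℝ (Fin (n+1))) :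
    ⟪reflLast n p, q⟫ = ⟪p, q⟫ - 2 * (p (Fin.last n) * q (Fin.last n)) := by
  simp only [PiLp.inner_apply, RCLike.inner_apply, conj_trivial, reflLast, PiLp.toLp_apply]
  rw [show (∑ i : Fin (n+1), q i * (if i = Fin.last n then -p i else p i))
      = ∑ i : Fin (n+1), (q i * p i - if i = Fin.last n then 2 * (p i * q i) else 0) from
    Finset.sum_congr rfl fun i _ => by split <;> ring,
    Finset.sum_sub_distrib, Finset.sum_ite_eq' Finset.univ (Fin.last n)
      (fun i => 2 * (p i * q i))]
  simp

lemma inner_reflLast_reflLast (n : ℕ) (p q : EuclideanSpace ℝ (Fin (n+1))) :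
    ⟪reflLast n p, reflLast n q⟫ = ⟪p, q⟫ := by
  simp only [PiLp.inner_apply, RCLike.inner_apply, conj_trivial, reflLast, PiLp.toLp_apply]
  exact Finset.sum_congr rfl fun i _ => by split <;> ring

lemma reflLast_injective (n : ℕ) : Function.Injective (reflLast n) := by
  intro p q h
  ext i
  have := congrArg (fun v => v i) h
  simp only [reflLast, PiLp.toLp_apply] at this
  split at this
  · linarith [this]
  · exact this

lemma abs_last_le_one (n : ℕ) (p : EuclideanSpace ℝ (Fin (n+1))) (h : ‖p‖ = 1) :
    |p (Fin.last n)| ≤ 1 := by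
  have h1 : p (Fin.last n) = ⟪p, EuclideanSpace.single (Fin.last n) (1:ℝ)⟫ := by
    simp [EuclideanSpace.inner_single_right]
  rw [h1]
  calc |⟪p, EuclideanSpace.single (Fin.last n) (1:ℝ)⟫|
      ≤ ‖p‖ * ‖EuclideanSpace.single (Fin.last n) (1:ℝ)‖ := abs_real_inner_le_norm _ _
    _ = 1 := by rw [h, EuclideanSpace.norm_single]; norm_num

theorem theorem4_doubling_step (n : ℕ) (θ₀ : ℝ)
    (hθ₀ : θ₀ ∈ Set.Ioo (π / 3) (π / 2))
    (P : Finset (EuclideanSpace ℝ (Fin (n + 1))))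
    (hnorm : ∀ p ∈ P, ‖p‖ = 1)
    (hhemi : ∀ p ∈ P, 0 ≤ p (Fin.last n))
    (hcode : ∀ p ∈ P, ∀ q ∈ P, p ≠ q → π / 3 ≤ Real.arccos ⟪p, q⟫)
    (Pa₂ Pb : Finset (EuclideanSpace ℝ (Fin (n + 1))))
    (hPa₂ : Pa₂ = P.filter (fun p =>
      π / 3 ≤ Real.arccos (p (Fin.last n)) ∧ Real.arccos (p (Fin.last n)) ≤ θ₀))
    (hPb : Pb = P.filter (fun p => Real.arccos (p (Fin.last n)) < π / 3))
    (T : Finset (EuclideanSpace ℝ (Fin (n + 1))))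
    (hT : T = P ∪ Pa₂.image (reflLast n) ∪ Pb.image (reflLast n)) :
    ∀ x ∈ T, ∀ y ∈ T, x ≠ y →
      π / 3 ≤ Real.arccos ⟪x, y⟫ ∨
      (∃ p ∈ Pa₂, ((x = p ∧ y = reflLast n p) ∨ (y = p ∧ x = reflLast n p)) ∧
        π - 2 * θ₀ ≤ Real.arccos ⟪x, y⟫) := by
  obtain ⟨hθ1, hθ2⟩ := hθ₀
  have hpi := Real.pi_pos
  -- distance does not decrease under reflecting one of two distinct upper points
  have key_cross : ∀ x ∈ P, ∀ q ∈ P, x ≠ q → π / 3 ≤ Real.arccos ⟪x, reflLast n q⟫ := by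
    intro x hxP q hqP hne
    have h1 : ⟪x, reflLast n q⟫ = ⟪x, q⟫ - 2 * (q (Fin.last n) * x (Fin.last n)) := by
      rw [real_inner_comm, inner_reflLast_left, real_inner_comm]
    have h2 : ⟪x, reflLast n q⟫ ≤ ⟪x, q⟫ := by
      have := mul_nonneg (hhemi q hqP) (hhemi x hxP)
      rw [h1]; linarith
    exact le_trans (hcode x hxP q hqP hne) (my_arccos_anti h2)
  have key_cross' : ∀ x ∈ P, ∀ q ∈ P, x ≠ q →
      π / 3 ≤ Real.arccos ⟪reflLast n q, x⟫ := by
    intro x hxP q hqP hne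
    rw [real_inner_comm]; exact key_cross x hxP q hqP hne
  -- self-inner with reflection
  have hself : ∀ q ∈ P, ⟪q, reflLast n q⟫ = 1 - 2 * (q (Fin.last n))^2 := by
    intro q hqP
    have h1 : ⟪reflLast n q, q⟫ = ⟪q, q⟫ - 2 * (q (Fin.last n) * q (Fin.last n)) :=
      inner_reflLast_left n q q
    have h2 : ⟪q, q⟫ = (1:ℝ) := by
      rw [real_inner_self_eq_norm_sq, hnorm q hqP]; norm_num
    rw [real_inner_comm, h1, h2]; ring
  have habs : ∀ q ∈ P, -1 ≤ q (Fin.last n) ∧ q (Fin.last n) ≤ 1 := fun q hq =>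
    abs_le.mp (abs_last_le_one n q (hnorm q hq))
  -- close points: reflection stays at distance ≥ π/3
  have key_self_b : ∀ q ∈ P, Real.arccos (q (Fin.last n)) < π / 3 →
      π / 3 ≤ Real.arccos ⟪q, reflLast n q⟫ := by
    intro q hqP hq
    obtain ⟨hm1, h1⟩ := habs q hqP
    have hcos : Real.cos (π/3) < Real.cos (Real.arccos (q (Fin.last n))) :=
      Real.cos_lt_cos_of_nonneg_of_le_pi (Real.arccos_nonneg _) (by linarith) hq
    rw [Real.cos_arccos hm1 h1, Real.cos_pi_div_three] at hcos
    have hle : ⟪q, reflLast n q⟫ ≤ 1/2 := by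
      rw [hself q hqP]; nlinarith
    calc π/3 = Real.arccos (1/2) := by
          rw [show (1:ℝ)/2 = Real.cos (π/3) by rw [Real.cos_pi_div_three],
            Real.arccos_cos (by positivity) (by linarith)]
      _ ≤ Real.arccos ⟪q, reflLast n q⟫ := my_arccos_anti hle
  -- middle points: reflection stays at distance ≥ π - 2θ₀
  have key_self_a : ∀ q ∈ P, Real.arccos (q (Fin.last n)) ≤ θ₀ →
      π - 2 * θ₀ ≤ Real.arccos ⟪q, reflLast n q⟫ := by
    intro q hqP hq
    obtain ⟨hm1, h1⟩ := habs q hqP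
    have hcos : Real.cos θ₀ ≤ Real.cos (Real.arccos (q (Fin.last n))) :=
      Real.cos_le_cos_of_nonneg_of_le_pi (Real.arccos_nonneg _) (by linarith) hq
    rw [Real.cos_arccos hm1 h1] at hcos
    have hcospos : 0 < Real.cos θ₀ :=
      Real.cos_pos_of_mem_Ioo ⟨by linarith, hθ2⟩
    have hle : ⟪q, reflLast n q⟫ ≤ Real.cos (π - 2*θ₀) := by
      rw [hself q hqP, Real.cos_pi_sub, Real.cos_two_mul]; nlinarith
    calc π - 2*θ₀ = Real.arccos (Real.cos (π - 2*θ₀)) :=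
          (Real.arccos_cos (by linarith) (by linarith)).symm
      _ ≤ Real.arccos ⟪q, reflLast n q⟫ := my_arccos_anti hle
  subst hPa₂ hPb hT
  intro x hx y hy hxy
  simp only [Finset.mem_union, Finset.mem_image] at hx hy
  -- memberships of base points
  have memA : ∀ a, a ∈ P.filter (fun p =>
      π / 3 ≤ Real.arccos (p (Fin.last n)) ∧ Real.arccos (p (Fin.last n)) ≤ θ₀) →
      a ∈ P ∧ Real.arccos (a (Fin.last n)) ≤ θ₀ := by
    intro a ha; rw [Finset.mem_filter] at ha; exact ⟨ha.1, ha.2.2⟩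
  have memB : ∀ a, a ∈ P.filter (fun p => Real.arccos (p (Fin.last n)) < π / 3) →
      a ∈ P ∧ Real.arccos (a (Fin.last n)) < π / 3 := by
    intro a ha; rw [Finset.mem_filter] at ha; exact ⟨ha.1, ha.2⟩
  rcases hx with (hxP | ⟨a, haA, rfl⟩) | ⟨a, haB, rfl⟩
  · rcases hy with (hyP | ⟨b, hbA, rfl⟩) | ⟨b, hbB, rfl⟩
    · exact Or.inl (hcode x hxP y hyP hxy)
    · by_cases hxb : x = b
      · subst hxb
        exact Or.inr ⟨x, hbA, Or.inl ⟨rfl, rfl⟩,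
          key_self_a x (memA x hbA).1 (memA x hbA).2⟩
      · exact Or.inl (key_cross x hxP b (memA b hbA).1 hxb)
    · by_cases hxb : x = b
      · subst hxb
        exact Or.inl (key_self_b x (memB x hbB).1 (memB x hbB).2)
      · exact Or.inl (key_cross x hxP b (memB b hbB).1 hxb)
  · rcases hy with (hyP | ⟨b, hbA, rfl⟩) | ⟨b, hbB, rfl⟩
    · by_cases hya : y = a
      · subst hya
        refine Or.inr ⟨y, haA, Or.inr ⟨rfl, rfl⟩, ?_⟩
        rw [real_inner_comm]
        exact key_self_a y (memA y haA).1 (memA y haA).2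
      · exact Or.inl (key_cross' y hyP a (memA a haA).1 hya)
    · have hab : a ≠ b := fun h => hxy (by rw [h])
      refine Or.inl ?_
      rw [inner_reflLast_reflLast]
      exact hcode a (memA a haA).1 b (memA b hbA).1 hab
    · have hab : a ≠ b := fun h => hxy (by rw [h])
      refine Or.inl ?_
      rw [inner_reflLast_reflLast]
      exact hcode a (memA a haA).1 b (memB b hbB).1 hab
  · rcases hy with (hyP | ⟨b, hbA, rfl⟩) | ⟨b, hbB, rfl⟩
    · by_cases hya : y = a
      · subst hya
        refine Or.inl ?_
        rw [real_inner_comm]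
        exact key_self_b y (memB y haB).1 (memB y haB).2
      · exact Or.inl (key_cross' y hyP a (memB a haB).1 hya)
    · have hab : a ≠ b := fun h => hxy (by rw [h])
      refine Or.inl ?_
      rw [inner_reflLast_reflLast]
      exact hcode a (memB a haB).1 b (memA b hbA).1 hab
    · have hab : a ≠ b := fun h => hxy (by rw [h])
      refine Or.inl ?_
      rw [inner_reflLast_reflLast]
      exact hcode a (memB a haB).1 b (memB b hbB).1 hab
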